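/- Gaussian integration identity relating ψ and ψ_S at t = 1 (unit norms): in the r-th level interpolating setup, assume additionally ‖x^{(i)}‖₂ = 1 for all x^{(i)} ∈ X and ‖y^{(i)}‖₂ = 1 for all y^{(i)} ∈ Y. Let ψ_S(X,Y,p,q,𝔪,β,s,t) be defined exactly as ψ but with Z replaced by Z_S = Σ_{i₁}(Σ_{i₂} exp(β D_{0,S}^{(i₁,i₂)}))^s, where D_{0,S}^{(i₁,i₂)} = √t (y^{(i₂)})ᵀGx^{(i₁)} + √(1−t)‖x^{(i₁)}‖₂(y^{(i₂)})ᵀ Σ_{k=1}^{r+1} b_k u^{(2,k)} + √(1−t)‖y^{(i₂)}‖₂(Σ_{k=1}^{r+1} c_k h^{(k)})ᵀx^{(i₁)} (i.e., the u^{(4,k)} terms are removed). Then integrating out the scalar Gaussians u^{(4,k)} yields: ψ_S(X,Y,p,q,𝔪,β,s,1) = −(sign(s) s β/(2√n)) Σ_{k=1}^{r+1} (p_{k−1}q_{k−1} − p_kq_k) 𝔪_k + ψ(X,Y,p,q,𝔪,β,s,1). -/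

import Mathlib

set_option linter.unusedVariables false

open MeasureTheory Real

namespace SFLR

noncomputable section

/-- The sample space of one group `𝒰_k = (u^{(4,k)}, u^{(2,k)}, h^{(k)})`. -/
abbrev Us (m n : ℕ) : Type := ℝ × (Fin m → ℝ) × (Fin n → ℝ)

/-- Standard Gaussian measure on `ℝ`. -/
def stdG : Measure ℝ := ProbabilityTheory.gaussianReal 0 1

/-- i.i.d. standard Gaussian vector measure. -/
def gVec (d : ℕ) : Measure (Fin d → ℝ) := Measure.pi fun _ => stdG

/-- i.i.d. standard Gaussian matrix measure. -/
def gMat (m n : ℕ) : Measure (Fin m → Fin n → ℝ) := Measure.pi fun _ => gVec n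

/-- Law of one group `𝒰_k`. -/
def muU (m n : ℕ) : Measure (Us m n) := stdG.prod ((gVec m).prod (gVec n))

/-- Joint law of `(G, (𝒰_k)_{k=1}^{r+1})`; the `k`-th group `𝒰_k` is coordinate `k-1`. -/
def muAll (r m n : ℕ) : Measure ((Fin m → Fin n → ℝ) × (Fin (r+1) → Us m n)) :=
  (gMat m n).prod (Measure.pi fun _ : Fin (r+1) => muU m n)

/-- Euclidean norm. -/
def nrm2 {d : ℕ} (v : Fin d → ℝ) : ℝ := Real.sqrt (∑ i, v i ^ 2)

/-- Euclidean inner product. -/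
def dotv {d : ℕ} (a b : Fin d → ℝ) : ℝ := ∑ i, a i * b i

variable {m n l : ℕ}

/-- The `r`-th level interpolating exponent `D₀^{(i₁,i₂)}`; the factor `ε` multiplies the
`u^{(4,k)}`-terms (`ε = 1` gives `D₀`, `ε = 0` gives `D_{0,S}`). -/
def D0R (r : ℕ) (ε β s t : ℝ) (mv p q : ℕ → ℝ) (x : Fin l → Fin n → ℝ) (y : Fin l → Fin m → ℝ)
    (G : Fin m → Fin n → ℝ) (U : Fin (r+1) → Us m n) (i1 i2 : Fin l) : ℝ :=
  Real.sqrt t * (∑ j, ∑ k, y i2 j * (G j k * x i1 k))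
    + Real.sqrt (1 - t) * nrm2 (x i1) *
        (∑ j, y i2 j * (∑ k : Fin (r+1), Real.sqrt (p (k : ℕ) - p ((k : ℕ) + 1)) * (U k).2.1 j))
    + ε * (Real.sqrt t * nrm2 (x i1) * nrm2 (y i2) *
        (∑ k : Fin (r+1),
          Real.sqrt (p (k : ℕ) * q (k : ℕ) - p ((k : ℕ) + 1) * q ((k : ℕ) + 1)) * (U k).1))
    + Real.sqrt (1 - t) * nrm2 (y i2) *
        (∑ kk, (∑ k : Fin (r+1), Real.sqrt (q (k : ℕ) - q ((k : ℕ) + 1)) * (U k).2.2 kk) * x i1 kk)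

/-- `A^{(i₁,i₂)}`. -/
def AR (r : ℕ) (ε β s t : ℝ) (mv p q : ℕ → ℝ) (x : Fin l → Fin n → ℝ) (y : Fin l → Fin m → ℝ)
    (G : Fin m → Fin n → ℝ) (U : Fin (r+1) → Us m n) (i1 i2 : Fin l) : ℝ :=
  Real.exp (β * D0R r ε β s t mv p q x y G U i1 i2)

/-- `C^{(i₁)}`. -/
def CR (r : ℕ) (ε β s t : ℝ) (mv p q : ℕ → ℝ) (x : Fin l → Fin n → ℝ) (y : Fin l → Fin m → ℝ)
    (G : Fin m → Fin n → ℝ) (U : Fin (r+1) → Us m n) (i1 : Fin l) : ℝ :=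
  ∑ i2, AR r ε β s t mv p q x y G U i1 i2

/-- `Z`. -/
def ZR (r : ℕ) (ε β s t : ℝ) (mv p q : ℕ → ℝ) (x : Fin l → Fin n → ℝ) (y : Fin l → Fin m → ℝ)
    (G : Fin m → Fin n → ℝ) (U : Fin (r+1) → Us m n) : ℝ :=
  ∑ i1, CR r ε β s t mv p q x y G U i1 ^ s

/-- `ζ_k`: successively integrated partition functions, `ζ₀ = Z`,
`ζ_k = E_{𝒰_k} ζ_{k-1}^{𝔪_k/𝔪_{k-1}}`. -/
def zetaR (r : ℕ) (ε β s t : ℝ) (mv p q : ℕ → ℝ) (x : Fin l → Fin n → ℝ)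
    (y : Fin l → Fin m → ℝ) (G : Fin m → Fin n → ℝ) : ℕ → (Fin (r+1) → Us m n) → ℝ
  | 0, U => ZR r ε β s t mv p q x y G U
  | k+1, U =>
      if h : k < r + 1 then
        ∫ u, zetaR r ε β s t mv p q x y G k (Function.update U ⟨k, h⟩ u) ^ (mv (k+1) / mv k)
          ∂ muU m n
      else 0

/-- The `r`-th level interpolating function `ψ`. -/
def psiR (r : ℕ) (ε β s t : ℝ) (mv p q : ℕ → ℝ) (x : Fin l → Fin n → ℝ)
    (y : Fin l → Fin m → ℝ) : ℝ :=
  ∫ ω, (β * |s| * Real.sqrt (n : ℝ) * mv r)⁻¹ *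
      Real.log (zetaR r ε β s t mv p q x y ω.1 r ω.2) ∂ muAll r m n

/-- The operator `Φ_{𝒰_k}` (for `k ≥ 1`). -/
def PhiR (r : ℕ) (ε β s t : ℝ) (mv p q : ℕ → ℝ) (x : Fin l → Fin n → ℝ)
    (y : Fin l → Fin m → ℝ) (k : ℕ)
    (f : (Fin m → Fin n → ℝ) → (Fin (r+1) → Us m n) → ℝ) :
    (Fin m → Fin n → ℝ) → (Fin (r+1) → Us m n) → ℝ :=
  fun G U =>
    if h : k - 1 < r + 1 then
      (∫ u, zetaR r ε β s t mv p q x y G (k-1) (Function.update U ⟨k-1, h⟩ u) ^ (mv k / mv (k-1))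
          * f G (Function.update U ⟨k-1, h⟩ u) ∂ muU m n) /
        zetaR r ε β s t mv p q x y G k U
    else 0

/-- `Φ_{𝒰_hi} ∘ ⋯ ∘ Φ_{𝒰_lo}` (identity when `hi < lo`). -/
def PhiUpToR (r : ℕ) (ε β s t : ℝ) (mv p q : ℕ → ℝ) (x : Fin l → Fin n → ℝ)
    (y : Fin l → Fin m → ℝ) (lo : ℕ) :
    ℕ → ((Fin m → Fin n → ℝ) → (Fin (r+1) → Us m n) → ℝ) →
      (Fin m → Fin n → ℝ) → (Fin (r+1) → Us m n) → ℝ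
  | 0, f => f
  | hi+1, f =>
      if hi + 1 < lo then f
      else PhiR r ε β s t mv p q x y (hi+1) (PhiUpToR r ε β s t mv p q x y lo hi f)

/-- `γ₀(i₁,i₂)`. -/
def gam0R (r : ℕ) (ε β s t : ℝ) (mv p q : ℕ → ℝ) (x : Fin l → Fin n → ℝ)
    (y : Fin l → Fin m → ℝ) (i1 i2 : Fin l) :
    (Fin m → Fin n → ℝ) → (Fin (r+1) → Us m n) → ℝ :=
  fun G U =>
    CR r ε β s t mv p q x y G U i1 ^ s / ZR r ε β s t mv p q x y G U *
      (AR r ε β s t mv p q x y G U i1 i2 / CR r ε β s t mv p q x y G U i1)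

/-- The measure `γ_{k₁+1}^{(r)}`. -/
def gamR (r : ℕ) (ε β s t : ℝ) (mv p q : ℕ → ℝ) (x : Fin l → Fin n → ℝ)
    (y : Fin l → Fin m → ℝ) (k1 : ℕ) (i1 i2 pp1 pp2 : Fin l) :
    (Fin m → Fin n → ℝ) → (Fin (r+1) → Us m n) → ℝ :=
  PhiUpToR r ε β s t mv p q x y (k1+1) r
    (fun G U =>
      PhiUpToR r ε β s t mv p q x y 1 k1 (gam0R r ε β s t mv p q x y i1 i2) G U *
        PhiUpToR r ε β s t mv p q x y 1 k1 (gam0R r ε β s t mv p q x y pp1 pp2) G U)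

/-- The measure `γ₀₁^{(r)}`. -/
def gam01R (r : ℕ) (ε β s t : ℝ) (mv p q : ℕ → ℝ) (x : Fin l → Fin n → ℝ)
    (y : Fin l → Fin m → ℝ) (i1 i2 : Fin l) :
    (Fin m → Fin n → ℝ) → (Fin (r+1) → Us m n) → ℝ :=
  PhiUpToR r ε β s t mv p q x y 1 r (gam0R r ε β s t mv p q x y i1 i2)

/-- The measure `γ₀₂^{(r)}`. -/
def gam02R (r : ℕ) (ε β s t : ℝ) (mv p q : ℕ → ℝ) (x : Fin l → Fin n → ℝ)
    (y : Fin l → Fin m → ℝ) (i1 i2 p2 : Fin l) :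
    (Fin m → Fin n → ℝ) → (Fin (r+1) → Us m n) → ℝ :=
  PhiUpToR r ε β s t mv p q x y 1 r
    (fun G U =>
      gam0R r ε β s t mv p q x y i1 i2 G U * gam0R r ε β s t mv p q x y i1 p2 G U)

/-- `E_{G,𝒰_{r+1}} ⟨f⟩_{γ_{k₁+1}^{(r)}}`. -/
def EBrR (r : ℕ) (ε β s t : ℝ) (mv p q : ℕ → ℝ) (x : Fin l → Fin n → ℝ)
    (y : Fin l → Fin m → ℝ) (k1 : ℕ) (f : Fin l → Fin l → Fin l → Fin l → ℝ) : ℝ :=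
  ∫ ω, (∑ i1, ∑ i2, ∑ pp1, ∑ pp2,
      f i1 i2 pp1 pp2 * gamR r ε β s t mv p q x y k1 i1 i2 pp1 pp2 ω.1 ω.2) ∂ muAll r m n

/-- `E_{G,𝒰_{r+1}} ⟨f⟩_{γ₀₁^{(r)}}`. -/
def EB01R (r : ℕ) (ε β s t : ℝ) (mv p q : ℕ → ℝ) (x : Fin l → Fin n → ℝ)
    (y : Fin l → Fin m → ℝ) (f : Fin l → Fin l → ℝ) : ℝ :=
  ∫ ω, (∑ i1, ∑ i2, f i1 i2 * gam01R r ε β s t mv p q x y i1 i2 ω.1 ω.2) ∂ muAll r m n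

/-- `E_{G,𝒰_{r+1}} ⟨f⟩_{γ₀₂^{(r)}}`. -/
def EB02R (r : ℕ) (ε β s t : ℝ) (mv p q : ℕ → ℝ) (x : Fin l → Fin n → ℝ)
    (y : Fin l → Fin m → ℝ) (f : Fin l → Fin l → Fin l → ℝ) : ℝ :=
  ∫ ω, (∑ i1, ∑ i2, ∑ p2, f i1 i2 p2 * gam02R r ε β s t mv p q x y i1 i2 p2 ω.1 ω.2)
    ∂ muAll r m n

/-- `E_{G,𝒰_{r+1}} ⟨‖x^{(i₁)}‖‖x^{(p₁)}‖‖y^{(i₂)}‖‖y^{(p₂)}‖⟩_{γ_{k₁+1}^{(r)}}`. -/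
def EXR (r : ℕ) (ε β s t : ℝ) (mv p q : ℕ → ℝ) (x : Fin l → Fin n → ℝ)
    (y : Fin l → Fin m → ℝ) (k1 : ℕ) : ℝ :=
  EBrR r ε β s t mv p q x y k1
    (fun i1 i2 pp1 pp2 => nrm2 (x i1) * nrm2 (x pp1) * nrm2 (y i2) * nrm2 (y pp2))

/-- The corrected interpolating function `ψ₁`. -/
def psi1R (r : ℕ) (ε β s t : ℝ) (mv p q : ℕ → ℝ) (x : Fin l → Fin n → ℝ)
    (y : Fin l → Fin m → ℝ) : ℝ :=
  -(Real.sign s * s * β / (2 * Real.sqrt (n : ℝ))) *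
      (∑ k ∈ Finset.range (r+1),
        mv (k+1) * (p k * q k * EXR r ε β s t mv p q x y k
          - p (k+1) * q (k+1) * EXR r ε β s t mv p q x y (k+1)))
    + psiR r ε β s t mv p q x y

/-- The component `u_j^{(2,k)}`. -/
def u2c {r m n : ℕ} (U : Fin (r+1) → Us m n) (k : ℕ) (j : Fin m) : ℝ :=
  if h : k - 1 < r + 1 then (U ⟨k-1, h⟩).2.1 j else 0

/-- The scalar `u^{(4,k)}`. -/
def u4c {r m n : ℕ} (U : Fin (r+1) → Us m n) (k : ℕ) : ℝ :=
  if h : k - 1 < r + 1 then (U ⟨k-1, h⟩).1 else 0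

/-- `u^{(i₁,3,k)} = (h^{(k)})ᵀ x^{(i₁)} / ‖x^{(i₁)}‖₂`. -/
def u3c {r m n l : ℕ} (x : Fin l → Fin n → ℝ) (U : Fin (r+1) → Us m n) (k : ℕ)
    (i1 : Fin l) : ℝ :=
  if h : k - 1 < r + 1 then dotv (U ⟨k-1, h⟩).2.2 (x i1) / nrm2 (x i1) else 0

/-- The nested conditional expectations
`E_{𝒰_v}(ζ_{v-1}^{𝔪_v/𝔪_{v-1}-1} ⋯ E_{𝒰₁}(ζ₀^{𝔪₁/𝔪₀-1} g) ⋯)`. -/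
def nestR (r : ℕ) (ε β s t : ℝ) (mv p q : ℕ → ℝ) (x : Fin l → Fin n → ℝ)
    (y : Fin l → Fin m → ℝ) (g : (Fin m → Fin n → ℝ) → (Fin (r+1) → Us m n) → ℝ) :
    ℕ → (Fin m → Fin n → ℝ) → (Fin (r+1) → Us m n) → ℝ
  | 0 => g
  | v+1 => fun G U =>
      if h : v < r + 1 then
        ∫ u, zetaR r ε β s t mv p q x y G v (Function.update U ⟨v, h⟩ u) ^
              (mv (v+1) / mv v - 1) *
            nestR r ε β s t mv p q x y g v G (Function.update U ⟨v, h⟩ u) ∂ muU m n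
      else 0

/-- `T^p_{k,1,j}(i₁,i₂)` at the `r`-th level. -/
def TpR (r : ℕ) (ε β s t : ℝ) (mv p q : ℕ → ℝ) (x : Fin l → Fin n → ℝ)
    (y : Fin l → Fin m → ℝ) (k : ℕ) (j : Fin m) (i1 i2 : Fin l) : ℝ :=
  ∫ ω, (zetaR r ε β s t mv p q x y ω.1 r ω.2)⁻¹ *
      nestR r ε β s t mv p q x y
        (fun G U => CR r ε β s t mv p q x y G U i1 ^ (s - 1) *
          AR r ε β s t mv p q x y G U i1 i2 * y i2 j * u2c U k j) r ω.1 ω.2 ∂ muAll r m n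

/-- `T^q_{k,2}(i₁,i₂)` at the `r`-th level. -/
def TqR (r : ℕ) (ε β s t : ℝ) (mv p q : ℕ → ℝ) (x : Fin l → Fin n → ℝ)
    (y : Fin l → Fin m → ℝ) (k : ℕ) (i1 i2 : Fin l) : ℝ :=
  ∫ ω, (zetaR r ε β s t mv p q x y ω.1 r ω.2)⁻¹ *
      nestR r ε β s t mv p q x y
        (fun G U => CR r ε β s t mv p q x y G U i1 ^ (s - 1) *
          AR r ε β s t mv p q x y G U i1 i2 * u3c x U k i1) r ω.1 ω.2 ∂ muAll r m n

/-- `T^{(p,q)}_{k,3}(i₁,i₂)` at the `r`-th level. -/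
def TpqR (r : ℕ) (ε β s t : ℝ) (mv p q : ℕ → ℝ) (x : Fin l → Fin n → ℝ)
    (y : Fin l → Fin m → ℝ) (k : ℕ) (i1 i2 : Fin l) : ℝ :=
  ∫ ω, (zetaR r ε β s t mv p q x y ω.1 r ω.2)⁻¹ *
      nestR r ε β s t mv p q x y
        (fun G U => CR r ε β s t mv p q x y G U i1 ^ (s - 1) *
          AR r ε β s t mv p q x y G U i1 i2 * u4c U k) r ω.1 ω.2 ∂ muAll r m n



/-! ### Auxiliary infrastructure -/

instance : IsProbabilityMeasure stdG := by
  unfold stdG; infer_instance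
instance (d : ℕ) : IsProbabilityMeasure (gVec d) := by
  unfold gVec; infer_instance
instance (m n : ℕ) : IsProbabilityMeasure (gMat m n) := by
  unfold gMat; infer_instance
instance (m n : ℕ) : IsProbabilityMeasure (muU m n) := by
  unfold muU; infer_instance
instance (r m n : ℕ) : IsProbabilityMeasure (muAll r m n) := by
  unfold muAll; infer_instance


open ProbabilityTheory in
lemma stdG_eq : stdG = (volume : Measure ℝ).withDensity
    (fun x => ENNReal.ofReal (gaussianPDFReal 0 1 x)) := by
  rw [stdG, gaussianReal_of_var_ne_zero 0 one_ne_zero]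
  rfl

open ProbabilityTheory in
lemma pdf_shift (c x : ℝ) :
    Real.exp (c * x) * gaussianPDFReal 0 1 x = Real.exp (c^2/2) * gaussianPDFReal c 1 x := by
  unfold gaussianPDFReal
  push_cast
  rw [mul_left_comm, mul_left_comm (Real.exp (c^2/2)), ← Real.exp_add, ← Real.exp_add]
  congr 1
  ring

open ProbabilityTheory in
lemma integrable_exp_stdG (c : ℝ) : Integrable (fun x => Real.exp (c * x)) stdG := by
  rw [stdG_eq]
  rw [integrable_withDensity_iff ((measurable_gaussianPDFReal 0 1).ennreal_ofReal) (ae_of_all _ fun x => ENNReal.ofReal_lt_top)]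
  have : (fun x => Real.exp (c*x) * (ENNReal.ofReal (gaussianPDFReal 0 1 x)).toReal)
      = fun x => Real.exp (c^2/2) * gaussianPDFReal c 1 x := by
    funext x
    rw [ENNReal.toReal_ofReal (gaussianPDFReal_nonneg 0 1 x), pdf_shift]
  rw [this]
  exact (integrable_gaussianPDFReal c 1).const_mul _

open ProbabilityTheory in
lemma integral_exp_stdG (c : ℝ) : ∫ x, Real.exp (c * x) ∂stdG = Real.exp (c^2/2) := by
  rw [stdG_eq]
  have hm : Measurable fun x => (gaussianPDFReal 0 1 x).toNNReal := (measurable_gaussianPDFReal 0 1).real_toNNReal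
  have hd : (fun x => ENNReal.ofReal (gaussianPDFReal 0 1 x))
      = fun x => (((gaussianPDFReal 0 1 x).toNNReal : NNReal) : ENNReal) := rfl
  rw [hd, integral_withDensity_eq_integral_smul hm]
  have : (fun x => (gaussianPDFReal 0 1 x).toNNReal • Real.exp (c * x))
      = fun x => Real.exp (c^2/2) * gaussianPDFReal c 1 x := by
    funext x
    rw [NNReal.smul_def, smul_eq_mul, Real.coe_toNNReal _ (gaussianPDFReal_nonneg 0 1 x),
      mul_comm, pdf_shift]
  rw [this, integral_const_mul, integral_gaussianPDFReal_eq_one c one_ne_zero, mul_one]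

lemma integrable_id_stdG : Integrable (fun x : ℝ => x) stdG := by
  have h : Integrable (fun x : ℝ => Real.exp (1 * x) + Real.exp ((-1) * x)) stdG :=
    (integrable_exp_stdG 1).add (integrable_exp_stdG (-1))
  refine h.mono' aestronglyMeasurable_id (ae_of_all _ fun x => ?_)
  simp only [norm_eq_abs, one_mul, neg_one_mul]
  rcases le_or_gt 0 x with hx | hx
  · have : x ≤ Real.exp x := (Real.add_one_le_exp x).trans' (by linarith)
    have h2 : (0:ℝ) < Real.exp (-x) := Real.exp_pos _
    rw [abs_of_nonneg hx]; linarith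
  · have : -x ≤ Real.exp (-x) := (Real.add_one_le_exp (-x)).trans' (by linarith)
    have h2 : (0:ℝ) < Real.exp x := Real.exp_pos _
    rw [abs_of_neg hx]; linarith

open ProbabilityTheory in
lemma integral_id_stdG : ∫ x, x ∂stdG = 0 := by
  have hmap : stdG.map (fun x => (-1) * x) = stdG := by
    rw [stdG, show (fun x : ℝ => (-1)*x) = ((-1) * ·) from rfl, gaussianReal_map_const_mul]
    norm_num
  have h1 : ∫ x, x ∂stdG = ∫ x, (-1) * x ∂stdG := by
    conv_lhs => rw [← hmap]
    rw [integral_map (φ := fun x : ℝ => (-1) * x) (f := fun x : ℝ => x)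
      (measurable_id.const_mul (-1)).aemeasurable aestronglyMeasurable_id]
  rw [integral_const_mul] at h1
  linarith



lemma map_eval_pi {ι : Type*} [Fintype ι] {α : ι → Type*} [∀ i, MeasurableSpace (α i)]
    (μ : ∀ i, Measure (α i)) [∀ i, IsProbabilityMeasure (μ i)] (i : ι) :
    (Measure.pi μ).map (Function.eval i) = μ i := by
  classical
  ext s hs
  rw [Measure.map_apply (measurable_pi_apply i) hs, Set.eval_preimage, Measure.pi_pi]
  rw [Finset.prod_eq_single i (fun j _ hj => by simp [Function.update_of_ne hj])
    (by simp)]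
  simp

lemma integral_eval_pi {ι : Type*} [Fintype ι] {α : ι → Type*} [∀ i, MeasurableSpace (α i)]
    (μ : ∀ i, Measure (α i)) [∀ i, IsProbabilityMeasure (μ i)] (i : ι) (f : α i → ℝ)
    (hf : AEStronglyMeasurable f (μ i)) :
    ∫ V, f (V i) ∂Measure.pi μ = ∫ a, f a ∂μ i := by
  rw [← map_eval_pi μ i, integral_map (measurable_pi_apply i).aemeasurable]
  rw [map_eval_pi μ i]; exact hf

lemma integrable_eval_pi {ι : Type*} [Fintype ι] {α : ι → Type*} [∀ i, MeasurableSpace (α i)]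
    (μ : ∀ i, Measure (α i)) [∀ i, IsProbabilityMeasure (μ i)] (i : ι) (f : α i → ℝ)
    (hf : Integrable f (μ i)) :
    Integrable (fun V => f (V i)) (Measure.pi μ) := by
  have := (integrable_map_measure (by rw [map_eval_pi μ i]; exact hf.1)
    (measurable_pi_apply i).aemeasurable).mp (by rw [map_eval_pi μ i]; exact hf)
  exact this

lemma integrable_comp_fst {α β : Type*} [MeasurableSpace α] [MeasurableSpace β]
    {μ : Measure α} {ν : Measure β} [SFinite μ] [IsProbabilityMeasure ν]
    (f : α → ℝ) (hf : Integrable f μ) :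
    Integrable (fun z : α × β => f z.1) (μ.prod ν) := by
  have hmap : (μ.prod ν).map Prod.fst = μ := Measure.fst_prod
  exact (integrable_map_measure (by rw [hmap]; exact hf.1) measurable_fst.aemeasurable).mp
    (by rw [hmap]; exact hf)

lemma integrable_comp_snd {α β : Type*} [MeasurableSpace α] [MeasurableSpace β]
    {μ : Measure α} {ν : Measure β} [IsProbabilityMeasure μ] [SFinite ν]
    (f : β → ℝ) (hf : Integrable f ν) :
    Integrable (fun z : α × β => f z.2) (μ.prod ν) := by
  have hmap : (μ.prod ν).map Prod.snd = ν := Measure.snd_prod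
  exact (integrable_map_measure (by rw [hmap]; exact hf.1) measurable_snd.aemeasurable).mp
    (by rw [hmap]; exact hf)


lemma integral_exp_fst_muU (m n : ℕ) (c : ℝ) :
    ∫ u : Us m n, Real.exp (c * u.1) ∂muU m n = Real.exp (c^2/2) := by
  unfold muU
  rw [integral_fun_fst (f := fun a : ℝ => Real.exp (c * a))]
  simp [integral_exp_stdG c]

/-! ### Algebraic reduction at `t = 1` -/

def DSf (x : Fin l → Fin n → ℝ) (y : Fin l → Fin m → ℝ) (G : Fin m → Fin n → ℝ)
    (i1 i2 : Fin l) : ℝ :=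
  ∑ j, ∑ k, y i2 j * (G j k * x i1 k)

def CSf (β : ℝ) (x : Fin l → Fin n → ℝ) (y : Fin l → Fin m → ℝ) (G : Fin m → Fin n → ℝ)
    (i1 : Fin l) : ℝ :=
  ∑ i2, Real.exp (β * DSf x y G i1 i2)

def ZSf (β s : ℝ) (x : Fin l → Fin n → ℝ) (y : Fin l → Fin m → ℝ)
    (G : Fin m → Fin n → ℝ) : ℝ :=
  ∑ i1, CSf β x y G i1 ^ s

def aq (p q : ℕ → ℝ) (j : ℕ) : ℝ := Real.sqrt (p j * q j - p (j+1) * q (j+1))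

def SUk (r : ℕ) {m n : ℕ} (p q : ℕ → ℝ) (k : ℕ) (U : Fin (r+1) → Us m n) : ℝ :=
  ∑ j : Fin (r+1), if k ≤ (j : ℕ) then aq p q (j : ℕ) * (U j).1 else 0

def Wk (mv p q : ℕ → ℝ) (k : ℕ) : ℝ :=
  ∑ j ∈ Finset.range k, mv (j+1) * (p j * q j - p (j+1) * q (j+1))

section Alg

variable {m n l : ℕ} (r : ℕ) (β s : ℝ) (mv p q : ℕ → ℝ)
  (x : Fin l → Fin n → ℝ) (y : Fin l → Fin m → ℝ)

lemma CSf_pos (hl : 0 < l) (G : Fin m → Fin n → ℝ) (i1 : Fin l) : 0 < CSf β x y G i1 := by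
  have : Nonempty (Fin l) := ⟨⟨0, hl⟩⟩
  exact Finset.sum_pos (fun i2 _ => Real.exp_pos _) Finset.univ_nonempty

lemma ZSf_pos (hl : 0 < l) (G : Fin m → Fin n → ℝ) : 0 < ZSf β s x y G := by
  have : Nonempty (Fin l) := ⟨⟨0, hl⟩⟩
  exact Finset.sum_pos (fun i1 _ => Real.rpow_pos_of_pos (CSf_pos β x y hl G i1) s)
    Finset.univ_nonempty

lemma CSf_nonneg (G : Fin m → Fin n → ℝ) (i1 : Fin l) : 0 ≤ CSf β x y G i1 :=
  Finset.sum_nonneg fun _ _ => (Real.exp_pos _).le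

lemma ZSf_nonneg (G : Fin m → Fin n → ℝ) : 0 ≤ ZSf β s x y G :=
  Finset.sum_nonneg fun i1 _ => Real.rpow_nonneg
    (Finset.sum_nonneg fun _ _ => (Real.exp_pos _).le) s

lemma SUk_succ (p q : ℕ → ℝ) (k : ℕ) (h : k < r+1) (U : Fin (r+1) → Us m n) :
    SUk r p q k U = aq p q k * (U ⟨k, h⟩).1 + SUk r p q (k+1) U := by
  unfold SUk
  have key : ∀ j : Fin (r+1),
      (if k ≤ (j : ℕ) then aq p q (j : ℕ) * (U j).1 else 0)
        = (if j = ⟨k, h⟩ then aq p q k * (U ⟨k, h⟩).1 else 0)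
          + (if k+1 ≤ (j : ℕ) then aq p q (j : ℕ) * (U j).1 else 0) := by
    intro j
    by_cases hj : j = ⟨k, h⟩
    · subst hj; simp
    · have hcoe : (j : ℕ) ≠ k := fun hc => hj (Fin.ext hc)
      by_cases hk : k ≤ (j : ℕ)
      · have : k + 1 ≤ (j : ℕ) := by omega
        simp [hj, hk, this]
      · have : ¬ (k + 1 ≤ (j : ℕ)) := by omega
        simp [hj, hk, this]
  rw [Finset.sum_congr rfl fun j _ => key j, Finset.sum_add_distrib]
  simp

lemma SUk_update_high (p q : ℕ → ℝ) (k : ℕ) (h : k < r+1) (u : Us m n)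
    (U : Fin (r+1) → Us m n) :
    SUk r p q (k+1) (Function.update U ⟨k, h⟩ u) = SUk r p q (k+1) U := by
  unfold SUk
  refine Finset.sum_congr rfl fun j _ => ?_
  by_cases hk : k + 1 ≤ (j : ℕ)
  · have hj : j ≠ ⟨k, h⟩ := by
      intro hc; rw [hc] at hk; simp at hk
    rw [Function.update_of_ne hj]
  · simp [hk]

lemma SUk_top (p q : ℕ → ℝ) (U : Fin (r+1) → Us m n) : SUk r p q (r+1) U = 0 := by
  unfold SUk
  refine Finset.sum_eq_zero fun j _ => ?_
  have : ¬ (r + 1 ≤ (j : ℕ)) := by omega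
  simp [this]

lemma D0R_t1 (ε : ℝ) (hxu : ∀ i, nrm2 (x i) = 1) (hyu : ∀ i, nrm2 (y i) = 1)
    (G : Fin m → Fin n → ℝ) (U : Fin (r+1) → Us m n) (i1 i2 : Fin l) :
    D0R r ε β s 1 mv p q x y G U i1 i2 = DSf x y G i1 i2 + ε * SUk r p q 0 U := by
  unfold D0R DSf SUk aq
  simp [hxu, hyu]

lemma ZR_t1 (ε : ℝ) (hxu : ∀ i, nrm2 (x i) = 1) (hyu : ∀ i, nrm2 (y i) = 1)
    (G : Fin m → Fin n → ℝ) (U : Fin (r+1) → Us m n) :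
    ZR r ε β s 1 mv p q x y G U
      = ZSf β s x y G * Real.exp (β * (ε * SUk r p q 0 U) * s) := by
  have h1 : ∀ i1 : Fin l, CR r ε β s 1 mv p q x y G U i1
      = CSf β x y G i1 * Real.exp (β * (ε * SUk r p q 0 U)) := by
    intro i1
    unfold CR AR CSf
    rw [Finset.sum_mul]
    refine Finset.sum_congr rfl fun i2 _ => ?_
    rw [D0R_t1 r β s mv p q x y ε hxu hyu G U i1 i2, ← Real.exp_add]
    ring_nf
  unfold ZR ZSf
  rw [Finset.sum_mul]
  refine Finset.sum_congr rfl fun i1 _ => ?_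
  rw [h1 i1, Real.mul_rpow (CSf_nonneg β x y G i1) (Real.exp_pos _).le, ← Real.exp_mul]

lemma zeta_eps0 (hl : 0 < l) (hxu : ∀ i, nrm2 (x i) = 1) (hyu : ∀ i, nrm2 (y i) = 1)
    (hm0 : mv 0 = 1) (hmne : ∀ k, k ≤ r → mv k ≠ 0) :
    ∀ k, k ≤ r → ∀ (G : Fin m → Fin n → ℝ) (U : Fin (r+1) → Us m n),
      zetaR r 0 β s 1 mv p q x y G k U = ZSf β s x y G ^ mv k := by
  intro k
  induction k with
  | zero =>
    intro _ G U
    show ZR r 0 β s 1 mv p q x y G U = _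
    rw [ZR_t1 r β s mv p q x y 0 hxu hyu G U, hm0, Real.rpow_one]
    simp
  | succ k ih =>
    intro hk G U
    have hk' : k < r + 1 := by omega
    show (if h : k < r + 1 then _ else _) = _
    rw [dif_pos hk']
    have hpt : ∀ u : Us m n,
        zetaR r 0 β s 1 mv p q x y G k (Function.update U ⟨k, hk'⟩ u) ^ (mv (k+1) / mv k)
          = (ZSf β s x y G ^ mv k) ^ (mv (k+1) / mv k) := by
      intro u; rw [ih (by omega) G _]
    simp only [hpt]
    rw [integral_const]
    simp only [probReal_univ, one_smul]
    rw [← Real.rpow_mul (ZSf_nonneg β s x y G)]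
    congr 1
    rw [mul_comm, div_mul_cancel₀ _ (hmne k (by omega))]

lemma zeta_eps1 (hl : 0 < l) (hxu : ∀ i, nrm2 (x i) = 1) (hyu : ∀ i, nrm2 (y i) = 1)
    (hm0 : mv 0 = 1) (hmne : ∀ k, k ≤ r → mv k ≠ 0)
    (hd : ∀ k, k ≤ r → 0 ≤ p k * q k - p (k+1) * q (k+1)) :
    ∀ k, k ≤ r → ∀ (G : Fin m → Fin n → ℝ) (U : Fin (r+1) → Us m n),
      zetaR r 1 β s 1 mv p q x y G k U
        = ZSf β s x y G ^ mv k *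
            Real.exp (s * β * mv k * SUk r p q k U
              + s^2 * β^2 / 2 * mv k * Wk mv p q k) := by
  intro k
  induction k with
  | zero =>
    intro _ G U
    show ZR r 1 β s 1 mv p q x y G U = _
    rw [ZR_t1 r β s mv p q x y 1 hxu hyu G U, hm0, Real.rpow_one]
    have hW : Wk mv p q 0 = 0 := by simp [Wk]
    rw [hW]
    congr 1
    ring
  | succ k ih =>
    intro hk G U
    have hk' : k < r + 1 := by omega
    have hmk : mv k ≠ 0 := hmne k (by omega)
    have hmm : mv k * (mv (k+1) / mv k) = mv (k+1) := by
      field_simp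
    show (if h : k < r + 1 then _ else _) = _
    rw [dif_pos hk']
    have hpt : ∀ u : Us m n,
        zetaR r 1 β s 1 mv p q x y G k (Function.update U ⟨k, hk'⟩ u) ^ (mv (k+1) / mv k)
          = (ZSf β s x y G ^ mv (k+1)
              * Real.exp (s * β * mv (k+1) * SUk r p q (k+1) U
                  + s^2 * β^2 / 2 * mv (k+1) * Wk mv p q k))
            * Real.exp ((s * β * mv (k+1) * aq p q k) * u.1) := by
      intro u
      rw [ih (by omega) G _]
      rw [SUk_succ r p q k hk' _, Function.update_self, SUk_update_high r p q k hk' u U]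
      rw [Real.mul_rpow (Real.rpow_nonneg (ZSf_nonneg β s x y G) _) (Real.exp_pos _).le,
        ← Real.rpow_mul (ZSf_nonneg β s x y G), hmm, ← Real.exp_mul,
        mul_assoc (ZSf β s x y G ^ mv (k+1)), ← Real.exp_add]
      congr 1
      field_simp
      ring
    simp only [hpt]
    rw [MeasureTheory.integral_const_mul, integral_exp_fst_muU m n _,
      mul_assoc (ZSf β s x y G ^ mv (k+1)), ← Real.exp_add]
    congr 2
    have haq : aq p q k ^ 2 = p k * q k - p (k+1) * q (k+1) :=
      Real.sq_sqrt (hd k (by omega))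
    have hWs : Wk mv p q (k+1) = Wk mv p q k + mv (k+1) * (p k * q k - p (k+1) * q (k+1)) :=
      Finset.sum_range_succ _ _
    rw [hWs, ← haq]
    ring

end Alg

/-! ### Integrability of `log ZS` -/

def Bnd (β : ℝ) (x : Fin l → Fin n → ℝ) (y : Fin l → Fin m → ℝ)
    (G : Fin m → Fin n → ℝ) : ℝ :=
  β * ∑ i1, ∑ i2, ∑ j, ∑ k, |y i2 j| * (|G j k| * |x i1 k|)

section Intg

variable {m n l : ℕ} (β s : ℝ) (x : Fin l → Fin n → ℝ) (y : Fin l → Fin m → ℝ)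

lemma continuous_DSf (i1 i2 : Fin l) : Continuous fun G => DSf x y G i1 i2 := by
  unfold DSf
  exact continuous_finset_sum _ fun j _ => continuous_finset_sum _ fun k _ =>
    continuous_const.mul ((continuous_apply_apply j k).mul continuous_const)

lemma continuous_CSf (i1 : Fin l) : Continuous fun G => CSf β x y G i1 := by
  unfold CSf
  exact continuous_finset_sum _ fun i2 _ =>
    (continuous_const.mul (continuous_DSf x y i1 i2)).rexp

lemma continuous_log_ZSf (hl : 0 < l) :
    Continuous fun G => Real.log (ZSf β s x y G) := by
  have hZ : Continuous fun G => ZSf β s x y G := by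
    unfold ZSf
    exact continuous_finset_sum _ fun i1 _ =>
      (continuous_CSf β x y i1).rpow_const fun G => Or.inl (CSf_pos β x y hl G i1).ne'
  exact hZ.log fun G => (ZSf_pos β s x y hl G).ne'

lemma Bnd_nonneg (hβ : 0 < β) (G : Fin m → Fin n → ℝ) : 0 ≤ Bnd β x y G := by
  unfold Bnd
  refine mul_nonneg hβ.le ?_
  refine Finset.sum_nonneg fun _ _ => Finset.sum_nonneg fun _ _ =>
    Finset.sum_nonneg fun _ _ => Finset.sum_nonneg fun _ _ => ?_
  positivity

lemma abs_DSf_le (hβ : 0 < β) (G : Fin m → Fin n → ℝ) (i1 i2 : Fin l) :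
    β * |DSf x y G i1 i2| ≤ Bnd β x y G := by
  unfold DSf Bnd
  refine mul_le_mul_of_nonneg_left ?_ hβ.le
  have habs : |∑ j, ∑ k, y i2 j * (G j k * x i1 k)|
      ≤ ∑ j, ∑ k, |y i2 j| * (|G j k| * |x i1 k|) := by
    refine (Finset.abs_sum_le_sum_abs _ _).trans (Finset.sum_le_sum fun j _ => ?_)
    refine (Finset.abs_sum_le_sum_abs _ _).trans (le_of_eq ?_)
    refine Finset.sum_congr rfl fun k _ => ?_
    rw [abs_mul, abs_mul]
  refine habs.trans ?_
  have hnn : ∀ i1' i2' : Fin l, 0 ≤ ∑ j, ∑ k, |y i2' j| * (|G j k| * |x i1' k|) := by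
    intro i1' i2'
    refine Finset.sum_nonneg fun _ _ => Finset.sum_nonneg fun _ _ => ?_
    positivity
  calc (∑ j, ∑ k, |y i2 j| * (|G j k| * |x i1 k|))
      ≤ ∑ i2', ∑ j, ∑ k, |y i2' j| * (|G j k| * |x i1 k|) :=
        Finset.single_le_sum (f := fun i2' => ∑ j, ∑ k, |y i2' j| * (|G j k| * |x i1 k|))
          (fun i _ => hnn i1 i) (Finset.mem_univ i2)
    _ ≤ ∑ i1', ∑ i2', ∑ j, ∑ k, |y i2' j| * (|G j k| * |x i1' k|) :=
        Finset.single_le_sum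
          (f := fun i1' => ∑ i2', ∑ j, ∑ k, |y i2' j| * (|G j k| * |x i1' k|))
          (fun i _ => Finset.sum_nonneg fun i2' _ => hnn i i2') (Finset.mem_univ i1)

lemma abs_log_ZSf_le (hl : 0 < l) (hβ : 0 < β) (G : Fin m → Fin n → ℝ) :
    |Real.log (ZSf β s x y G)| ≤ (1 + |s|) * Real.log l + |s| * Bnd β x y G := by
  set B := Bnd β x y G with hBdef
  have hB : 0 ≤ B := Bnd_nonneg β x y hβ G
  have hl1 : (1:ℝ) ≤ (l:ℝ) := by exact_mod_cast hl
  have hlpos : (0:ℝ) < (l:ℝ) := by linarith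
  have hlogl : 0 ≤ Real.log l := Real.log_nonneg hl1
  have hDle : ∀ i1 i2 : Fin l, β * DSf x y G i1 i2 ≤ B := by
    intro i1 i2
    refine le_trans ?_ (abs_DSf_le β x y hβ G i1 i2)
    exact mul_le_mul_of_nonneg_left (le_abs_self _) hβ.le
  have hDge : ∀ i1 i2 : Fin l, -B ≤ β * DSf x y G i1 i2 := by
    intro i1 i2
    have : β * (-(DSf x y G i1 i2)) ≤ β * |DSf x y G i1 i2| :=
      mul_le_mul_of_nonneg_left (neg_le_abs _) hβ.le
    have h2 := this.trans (abs_DSf_le β x y hβ G i1 i2)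
    linarith
  have hCu : ∀ i1, CSf β x y G i1 ≤ (l:ℝ) * Real.exp B := by
    intro i1
    unfold CSf
    calc (∑ i2, Real.exp (β * DSf x y G i1 i2)) ≤ ∑ _i2 : Fin l, Real.exp B :=
          Finset.sum_le_sum fun i2 _ => Real.exp_le_exp.2 (hDle i1 i2)
      _ = (l:ℝ) * Real.exp B := by
          rw [Finset.sum_const, Finset.card_univ, Fintype.card_fin, nsmul_eq_mul]
  have hCl : ∀ i1, Real.exp (-B) ≤ CSf β x y G i1 := by
    intro i1
    refine le_trans (Real.exp_le_exp.2 (hDge i1 ⟨0, hl⟩)) ?_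
    exact Finset.single_le_sum (f := fun i2 => Real.exp (β * DSf x y G i1 i2))
      (fun _ _ => (Real.exp_pos _).le) (Finset.mem_univ (⟨0, hl⟩ : Fin l))
  have hlexp : (l:ℝ) * Real.exp B = Real.exp (Real.log l + B) := by
    rw [Real.exp_add, Real.exp_log hlpos]
  set L := Real.log l + B with hLdef
  have hLnn : 0 ≤ L := by simp only [hLdef]; linarith
  have hsu : ∀ i1, CSf β x y G i1 ^ s ≤ Real.exp (|s| * L) := by
    intro i1
    rcases le_or_gt 0 s with h | h
    · calc CSf β x y G i1 ^ s ≤ ((l:ℝ) * Real.exp B) ^ s :=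
            Real.rpow_le_rpow (CSf_nonneg β x y G i1) (hCu i1) h
        _ = Real.exp (L * s) := by rw [hlexp, ← Real.exp_mul]
        _ ≤ Real.exp (|s| * L) := Real.exp_le_exp.2 (le_of_eq (by rw [abs_of_nonneg h]; ring))
    · calc CSf β x y G i1 ^ s ≤ (Real.exp (-B)) ^ s :=
            Real.rpow_le_rpow_of_nonpos (Real.exp_pos _) (hCl i1) h.le
        _ = Real.exp (-B * s) := by rw [← Real.exp_mul]
        _ ≤ Real.exp (|s| * L) := by
            refine Real.exp_le_exp.2 ?_
            rw [abs_of_neg h]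
            nlinarith
  have hsl : ∀ i1, Real.exp (-(|s| * L)) ≤ CSf β x y G i1 ^ s := by
    intro i1
    rcases le_or_gt 0 s with h | h
    · refine le_trans ?_ (Real.rpow_le_rpow (Real.exp_pos (-B)).le (hCl i1) h)
      rw [← Real.exp_mul]
      refine Real.exp_le_exp.2 ?_
      rw [abs_of_nonneg h]
      nlinarith
    · refine le_trans ?_
        (Real.rpow_le_rpow_of_nonpos (CSf_pos β x y hl G i1) (hCu i1) h.le)
      rw [hlexp, ← Real.exp_mul]
      refine Real.exp_le_exp.2 (le_of_eq ?_)
      rw [abs_of_neg h]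
      ring
  have hZu : ZSf β s x y G ≤ (l:ℝ) * Real.exp (|s| * L) := by
    unfold ZSf
    calc (∑ i1, CSf β x y G i1 ^ s) ≤ ∑ _i1 : Fin l, Real.exp (|s| * L) :=
          Finset.sum_le_sum fun i1 _ => hsu i1
      _ = (l:ℝ) * Real.exp (|s| * L) := by
          rw [Finset.sum_const, Finset.card_univ, Fintype.card_fin, nsmul_eq_mul]
  have hZl : Real.exp (-(|s| * L)) ≤ ZSf β s x y G := by
    refine le_trans (hsl ⟨0, hl⟩) ?_
    exact Finset.single_le_sum (f := fun i1 => CSf β x y G i1 ^ s)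
      (fun i _ => Real.rpow_nonneg (CSf_nonneg β x y G i) s) (Finset.mem_univ (⟨0, hl⟩ : Fin l))
  have h1 : Real.log (ZSf β s x y G) ≤ Real.log l + |s| * L := by
    have := Real.log_le_log (ZSf_pos β s x y hl G) hZu
    rwa [Real.log_mul hlpos.ne' (Real.exp_ne_zero _), Real.log_exp] at this
  have h2 : -(|s| * L) ≤ Real.log (ZSf β s x y G) := by
    have := Real.log_le_log (Real.exp_pos _) hZl
    rwa [Real.log_exp] at this
  have habs : 0 ≤ |s| := abs_nonneg s
  rw [abs_le]
  constructor
  · have hsl' : 0 ≤ |s| * Real.log l := mul_nonneg habs hlogl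
    simp only [hLdef] at h2
    nlinarith
  · simp only [hLdef] at h1
    nlinarith

lemma integrable_coord (m n : ℕ) (j : Fin m) (k : Fin n) :
    Integrable (fun G => G j k) (gMat m n) := by
  have h1 : Integrable (fun v : Fin n → ℝ => v k) (gVec n) := by
    unfold gVec
    exact integrable_eval_pi (fun _ : Fin n => stdG) k (fun a : ℝ => a) integrable_id_stdG
  unfold gMat
  exact integrable_eval_pi (fun _ : Fin m => gVec n) j (fun v : Fin n → ℝ => v k) h1

lemma integrable_Bnd (hβ : 0 < β) : Integrable (fun G => Bnd β x y G) (gMat m n) := by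
  unfold Bnd
  refine Integrable.const_mul ?_ β
  refine integrable_finset_sum _ fun i1 _ => ?_
  refine integrable_finset_sum _ fun i2 _ => ?_
  refine integrable_finset_sum _ fun j _ => ?_
  refine integrable_finset_sum _ fun k _ => ?_
  exact ((integrable_coord m n j k).abs.mul_const (|x i1 k|)).const_mul (|y i2 j|)

lemma integrable_log_ZSf (hl : 0 < l) (hβ : 0 < β) :
    Integrable (fun G => Real.log (ZSf β s x y G)) (gMat m n) := by
  refine Integrable.mono'
    ((integrable_const ((1 + |s|) * Real.log l)).add
      ((integrable_Bnd β x y hβ).const_mul (|s|)))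
    (continuous_log_ZSf β s x y hl).aestronglyMeasurable
    (ae_of_all _ fun G => ?_)
  simpa [Real.norm_eq_abs] using abs_log_ZSf_le β s x y hl hβ G

end Intg

/-- Gaussian integration identity relating `ψ` and `ψ_S` at `t = 1` for unit-norm sets. -/
theorem gaussian_integration_psi_psiS
    (r m n l : ℕ) (hr : 1 ≤ r) (hm : 1 ≤ m) (hn : 1 ≤ n) (hl : 1 ≤ l)
    (β s : ℝ) (hβ : 0 < β) (hs : s ≠ 0)
    (mv p q : ℕ → ℝ)
    (hm0 : mv 0 = 1) (hmr1 : mv (r+1) = 0) (hmpos : ∀ k, 1 ≤ k → k ≤ r → 0 < mv k)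
    (hp0 : p 0 ≤ 1) (hpmono : ∀ k ≤ r, p (k+1) ≤ p k) (hpend : p (r+1) = 0)
    (hq0 : q 0 ≤ 1) (hqmono : ∀ k ≤ r, q (k+1) ≤ q k) (hqend : q (r+1) = 0)
    (x : Fin l → Fin n → ℝ) (y : Fin l → Fin m → ℝ)
    (hx : ∀ i, x i ≠ 0) (hy : ∀ i, y i ≠ 0)
    (hxu : ∀ i, nrm2 (x i) = 1) (hyu : ∀ i, nrm2 (y i) = 1) :
    psiR r 0 β s 1 mv p q x y
      = -(Real.sign s * s * β / (2 * Real.sqrt (n : ℝ))) *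
          (∑ k ∈ Finset.range (r+1), (p k * q k - p (k+1) * q (k+1)) * mv (k+1))
        + psiR r 1 β s 1 mv p q x y := by
  classical
  have hl0 : 0 < l := hl
  have hmne : ∀ k, k ≤ r → mv k ≠ 0 := by
    intro k hk
    rcases Nat.eq_zero_or_pos k with h | h
    · rw [h, hm0]; exact one_ne_zero
    · exact (hmpos k h hk).ne'
  have hpnn : ∀ j, j ≤ r + 1 → 0 ≤ p j := by
    have key : ∀ d j, j + d = r + 1 → 0 ≤ p j := by
      intro d
      induction d with
      | zero =>
        intro j hj
        have hj' : j = r + 1 := by omega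
        rw [hj', hpend]
      | succ d ih =>
        intro j hj
        exact (ih (j+1) (by omega)).trans (hpmono j (by omega))
    intro j hj
    exact key (r + 1 - j) j (by omega)
  have hqnn : ∀ j, j ≤ r + 1 → 0 ≤ q j := by
    have key : ∀ d j, j + d = r + 1 → 0 ≤ q j := by
      intro d
      induction d with
      | zero =>
        intro j hj
        have hj' : j = r + 1 := by omega
        rw [hj', hqend]
      | succ d ih =>
        intro j hj
        exact (ih (j+1) (by omega)).trans (hqmono j (by omega))
    intro j hj
    exact key (r + 1 - j) j (by omega)
  have hd : ∀ k, k ≤ r → 0 ≤ p k * q k - p (k+1) * q (k+1) := by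
    intro k hk
    have h1 : p (k+1) * q (k+1) ≤ p k * q k :=
      mul_le_mul (hpmono k hk) (hqmono k hk) (hqnn (k+1) (by omega)) (hpnn k (by omega))
    linarith
  have hmr : mv r ≠ 0 := hmne r le_rfl
  have hrlt : r < r + 1 := Nat.lt_succ_self r
  have hz0 : (fun ω : (Fin m → Fin n → ℝ) × (Fin (r+1) → Us m n) =>
        (β * |s| * Real.sqrt (n : ℝ) * mv r)⁻¹ *
          Real.log (zetaR r 0 β s 1 mv p q x y ω.1 r ω.2))
      = fun ω => (β * |s| * Real.sqrt (n : ℝ) * mv r)⁻¹ *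
          (mv r * Real.log (ZSf β s x y ω.1)) := by
    funext ω
    rw [zeta_eps0 r β s mv p q x y hl0 hxu hyu hm0 hmne r le_rfl ω.1 ω.2,
      Real.log_rpow (ZSf_pos β s x y hl0 ω.1)]
  have hz1 : (fun ω : (Fin m → Fin n → ℝ) × (Fin (r+1) → Us m n) =>
        (β * |s| * Real.sqrt (n : ℝ) * mv r)⁻¹ *
          Real.log (zetaR r 1 β s 1 mv p q x y ω.1 r ω.2))
      = fun ω => (β * |s| * Real.sqrt (n : ℝ) * mv r)⁻¹ *
            (mv r * Real.log (ZSf β s x y ω.1))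
          + (((β * |s| * Real.sqrt (n : ℝ) * mv r)⁻¹ * (s * β * mv r * aq p q r)) *
                (ω.2 ⟨r, hrlt⟩).1
              + (β * |s| * Real.sqrt (n : ℝ) * mv r)⁻¹ *
                  (s^2 * β^2 / 2 * mv r * Wk mv p q r)) := by
    funext ω
    rw [zeta_eps1 r β s mv p q x y hl0 hxu hyu hm0 hmne hd r le_rfl ω.1 ω.2,
      Real.log_mul (Real.rpow_pos_of_pos (ZSf_pos β s x y hl0 ω.1) _).ne'
        (Real.exp_ne_zero _),
      Real.log_rpow (ZSf_pos β s x y hl0 ω.1), Real.log_exp,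
      SUk_succ r p q r hrlt ω.2, SUk_top r p q ω.2]
    ring
  have hfint : Integrable (fun ω : (Fin m → Fin n → ℝ) × (Fin (r+1) → Us m n) =>
      (β * |s| * Real.sqrt (n : ℝ) * mv r)⁻¹ * (mv r * Real.log (ZSf β s x y ω.1)))
      (muAll r m n) := by
    unfold muAll
    exact integrable_comp_fst
      (fun G => (β * |s| * Real.sqrt (n : ℝ) * mv r)⁻¹ * (mv r * Real.log (ZSf β s x y G)))
      (((integrable_log_ZSf β s x y hl0 hβ).const_mul (mv r)).const_mul _)
  have hcoordint : Integrable (fun ω : (Fin m → Fin n → ℝ) × (Fin (r+1) → Us m n) =>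
      (ω.2 ⟨r, hrlt⟩).1) (muAll r m n) := by
    unfold muAll
    refine integrable_comp_snd (fun V : Fin (r+1) → Us m n => (V ⟨r, hrlt⟩).1) ?_
    refine integrable_eval_pi (fun _ : Fin (r+1) => muU m n) ⟨r, hrlt⟩
      (fun u : Us m n => u.1) ?_
    unfold muU
    exact integrable_comp_fst (fun a : ℝ => a) integrable_id_stdG
  have hint0 : ∫ ω : (Fin m → Fin n → ℝ) × (Fin (r+1) → Us m n),
      (ω.2 ⟨r, hrlt⟩).1 ∂muAll r m n = 0 := by
    unfold muAll
    rw [integral_fun_snd (f := fun V : Fin (r+1) → Us m n => (V ⟨r, hrlt⟩).1)]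
    rw [integral_eval_pi (fun _ : Fin (r+1) => muU m n) ⟨r, hrlt⟩ (fun u : Us m n => u.1)
      measurable_fst.aestronglyMeasurable]
    unfold muU
    rw [integral_fun_fst (f := fun a : ℝ => a)]
    simp [integral_id_stdG]
  have hpsi0 : psiR r 0 β s 1 mv p q x y
      = ∫ ω, (β * |s| * Real.sqrt (n : ℝ) * mv r)⁻¹ *
          (mv r * Real.log (ZSf β s x y ω.1)) ∂muAll r m n := by
    unfold psiR
    rw [hz0]
  have hpsi1 : psiR r 1 β s 1 mv p q x y
      = (∫ ω, (β * |s| * Real.sqrt (n : ℝ) * mv r)⁻¹ *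
          (mv r * Real.log (ZSf β s x y ω.1)) ∂muAll r m n)
        + (β * |s| * Real.sqrt (n : ℝ) * mv r)⁻¹ *
            (s^2 * β^2 / 2 * mv r * Wk mv p q r) := by
    have hg1 : Integrable (fun ω : (Fin m → Fin n → ℝ) × (Fin (r+1) → Us m n) =>
        ((β * |s| * Real.sqrt (n : ℝ) * mv r)⁻¹ * (s * β * mv r * aq p q r)) *
          (ω.2 ⟨r, hrlt⟩).1) (muAll r m n) := hcoordint.const_mul _
    have hg2 : Integrable (fun _ : (Fin m → Fin n → ℝ) × (Fin (r+1) → Us m n) =>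
        (β * |s| * Real.sqrt (n : ℝ) * mv r)⁻¹ *
          (s^2 * β^2 / 2 * mv r * Wk mv p q r)) (muAll r m n) := integrable_const _
    have hgint : Integrable (fun ω : (Fin m → Fin n → ℝ) × (Fin (r+1) → Us m n) =>
        ((β * |s| * Real.sqrt (n : ℝ) * mv r)⁻¹ * (s * β * mv r * aq p q r)) *
            (ω.2 ⟨r, hrlt⟩).1
          + (β * |s| * Real.sqrt (n : ℝ) * mv r)⁻¹ *
              (s^2 * β^2 / 2 * mv r * Wk mv p q r)) (muAll r m n) := hg1.add hg2
    have hmid : ∫ ω : (Fin m → Fin n → ℝ) × (Fin (r+1) → Us m n),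
        ((β * |s| * Real.sqrt (n : ℝ) * mv r)⁻¹ * (s * β * mv r * aq p q r)) *
          (ω.2 ⟨r, hrlt⟩).1 ∂muAll r m n = 0 := by
      rw [integral_const_mul, hint0, mul_zero]
    unfold psiR
    rw [hz1]
    rw [integral_add hfint hgint]
    rw [integral_add hg1 hg2]
    rw [hmid, zero_add, integral_const]
    simp
  have hsgn : Real.sign s * s = |s| := by
    rcases lt_or_gt_of_ne hs with h | h
    · rw [Real.sign_of_neg h, abs_of_neg h]; ring
    · rw [Real.sign_of_pos h, abs_of_pos h]; ring
  have hSig : (∑ k ∈ Finset.range (r+1), (p k * q k - p (k+1) * q (k+1)) * mv (k+1))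
      = Wk mv p q r := by
    rw [Finset.sum_range_succ, hmr1, mul_zero, add_zero]
    unfold Wk
    exact Finset.sum_congr rfl fun j _ => mul_comm _ _
  have hnpos : (0:ℝ) < (n:ℝ) := by exact_mod_cast hn
  have hsqn : Real.sqrt (n : ℝ) ≠ 0 := (Real.sqrt_pos.2 hnpos).ne'
  have hsabs : |s| ≠ 0 := abs_ne_zero.2 hs
  have hkey : -(Real.sign s * s * β / (2 * Real.sqrt (n : ℝ))) *
        (∑ k ∈ Finset.range (r+1), (p k * q k - p (k+1) * q (k+1)) * mv (k+1))
      + (β * |s| * Real.sqrt (n : ℝ) * mv r)⁻¹ *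
          (s^2 * β^2 / 2 * mv r * Wk mv p q r) = 0 := by
    rw [hsgn, hSig]
    field_simp
    rw [← sq_abs s]
    ring
  rw [hpsi0, hpsi1]
  linarith [hkey]


end

end SFLR
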